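/- If 𝒯 is an antiunitary operator on a finite-dimensional complex Hilbert space with 𝒯∘𝒯 = -I, then the dimension of the space is even, and there exists an orthonormal basis whose vectors come in pairs φⱼ, ψⱼ with 𝒯(φⱼ) = -ψⱼ and 𝒯(ψⱼ) = φⱼ. -/

import Mathlib

local notation "⟪" x ", " y "⟫" => @inner ℂ _ _ x y

universe u

private lemma aux_orth {H : Type u} [NormedAddCommGroup H] [InnerProductSpace ℂ H]
    {ι : Type*} (g : ι → H) (w : H) (h : ∀ i, ⟪g i, w⟫ = 0) :
    w ∈ (Submodule.span ℂ (Set.range g))ᗮ := by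
  rw [Submodule.mem_orthogonal]
  intro u hu
  induction hu using Submodule.span_induction with
  | mem x hx => obtain ⟨i, rfl⟩ := hx; exact h i
  | zero => simp
  | add x y _ _ hx hy => rw [inner_add_left, hx, hy, add_zero]
  | smul c x _ hx => rw [inner_smul_left, hx, mul_zero]

private lemma aux_main (n : ℕ) : ∀ (H : Type u) (_ : NormedAddCommGroup H)
    (_ : InnerProductSpace ℂ H) (_ : FiniteDimensional ℂ H),
    Module.finrank ℂ H = n → ∀ (T : H → H),
    (∀ v w, T (v + w) = T v + T w) →
    (∀ (c : ℂ) v, T (c • v) = (starRingEnd ℂ c) • T v) →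
    (∀ v w, ⟪T v, T w⟫ = starRingEnd ℂ ⟪v, w⟫) →
    (∀ v, T (T v) = -v) →
    ∃ m : ℕ, n = 2 * m ∧
      ∃ b : OrthonormalBasis (Fin m ⊕ Fin m) ℂ H,
        ∀ j : Fin m, T (b (Sum.inl j)) = -(b (Sum.inr j)) ∧
          T (b (Sum.inr j)) = b (Sum.inl j) := by
  induction n using Nat.strong_induction_on with
  | _ n ih =>
  intro H _ _ _ hrank T hadd hsmul hinner hsq
  rcases Nat.eq_zero_or_pos n with hn | hn
  · subst hn
    refine ⟨0, by ring, ?_⟩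
    have hsub : Subsingleton H := Module.finrank_zero_iff.mp hrank
    have hon : Orthonormal ℂ (fun _ : Fin 0 ⊕ Fin 0 => (0 : H)) := by
      constructor
      · rintro (⟨_, h⟩ | ⟨_, h⟩) <;> omega
      · rintro (⟨_, h⟩ | ⟨_, h⟩) <;> omega
    refine ⟨OrthonormalBasis.mk hon ?_, ?_⟩
    · intro x _
      have : x = 0 := Subsingleton.elim x 0
      simp [this]
    · rintro ⟨_, h⟩; omega
  -- basic facts about T
  have hTneg : ∀ v : H, T (-v) = -T v := by
    intro v
    rw [← neg_one_smul ℂ v, hsmul]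
    simp
  have hTorth : ∀ x : H, ⟪T x, x⟫ = 0 := by
    intro x
    have h1 := hinner x (T x)
    rw [hsq, inner_neg_right, inner_conj_symm] at h1
    have : (2 : ℂ) * ⟪T x, x⟫ = 0 := by linear_combination -h1
    simpa using this
  have hTnorm : ∀ x : H, ‖T x‖ = ‖x‖ := by
    intro x
    have h3 : ‖T x‖ ^ 2 = ‖x‖ ^ 2 := by
      rw [← @inner_self_eq_norm_sq ℂ, ← @inner_self_eq_norm_sq ℂ, hinner]
      simp
    nlinarith [norm_nonneg (T x), norm_nonneg x]
  -- pick a unit vector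
  have hpos : 0 < Module.finrank ℂ H := by omega
  have : Nontrivial H := Module.finrank_pos_iff.mp hpos
  obtain ⟨v0, hv0⟩ := exists_ne (0 : H)
  set v : H := ‖v0‖⁻¹ • v0 with hvdef
  have hv : ‖v‖ = 1 := norm_smul_inv_norm hv0
  have hvv : ⟪v, v⟫ = 1 := by
    rw [inner_self_eq_norm_sq_to_K, hv]; norm_num
  have hTvTv : ⟪T v, T v⟫ = 1 := by rw [hinner, hvv]; simp
  have hTvv : ⟪T v, v⟫ = 0 := hTorth v
  have hvTv : ⟪v, T v⟫ = 0 := by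
    rw [← inner_conj_symm, hTvv]; simp
  -- the invariant 2-dimensional subspace and its complement
  set g : Fin 2 → H := ![T v, v] with hgdef
  have hg : Orthonormal ℂ g := by
    rw [orthonormal_iff_ite]
    intro i j
    fin_cases i <;> fin_cases j <;>
      simp [hgdef, hTvTv, hvv, hTvv, hvTv, hv, hTnorm]
  set S : Submodule ℂ H := Submodule.span ℂ (Set.range g) with hSdef
  set K : Submodule ℂ H := Sᗮ with hKdef
  have hTvS : T v ∈ S := Submodule.subset_span ⟨0, rfl⟩
  have hvS : v ∈ S := Submodule.subset_span ⟨1, rfl⟩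
  have hmemK : ∀ w : H, ⟪T v, w⟫ = 0 → ⟪v, w⟫ = 0 → w ∈ K := by
    intro w h1 h2
    refine aux_orth g w ?_
    intro i; fin_cases i <;> simpa [hgdef]
  have hKTv : ∀ w : H, w ∈ K → ⟪T v, w⟫ = 0 :=
    fun w hw => Submodule.inner_right_of_mem_orthogonal hTvS hw
  have hKv : ∀ w : H, w ∈ K → ⟪v, w⟫ = 0 :=
    fun w hw => Submodule.inner_right_of_mem_orthogonal hvS hw
  have hTK : ∀ w : H, w ∈ K → T w ∈ K := by
    intro w hw
    refine hmemK _ ?_ ?_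
    · have h1 := hinner v w
      rw [hKv w hw] at h1
      simpa using h1
    · have h1 := hinner (T v) w
      rw [hKTv w hw] at h1
      have h2 : T (T v) = -v := hsq v
      rw [h2, inner_neg_left] at h1
      simpa [neg_eq_zero] using h1
  -- the restricted operator
  set T' : K → K := fun w => ⟨T w, hTK w w.2⟩ with hT'def
  have hrankS : Module.finrank ℂ S = 2 := by
    rw [hSdef, finrank_span_eq_card hg.linearIndependent]
    simp
  have hrankK : 2 + Module.finrank ℂ K = n := by
    rw [← hrank, ← hrankS, hKdef]
    exact Submodule.finrank_add_finrank_orthogonal S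
  obtain ⟨m, hm, b', hb'⟩ := ih (Module.finrank ℂ K) (by omega) K
    inferInstance inferInstance inferInstance rfl T'
    (fun a b => by ext; exact hadd a b)
    (fun c a => by ext; exact hsmul c a)
    (fun a b => by
      rw [Submodule.coe_inner, Submodule.coe_inner]
      exact hinner a b)
    (fun a => by ext; exact hsq a)
  refine ⟨m + 1, by omega, ?_⟩
  -- build the combined orthonormal family
  set f : Fin (m + 1) ⊕ Fin (m + 1) → H :=
    Sum.elim (Fin.cons (T v) (fun j => (b' (Sum.inl j) : H)))
      (Fin.cons v (fun j => (b' (Sum.inr j) : H))) with hfdef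
  have hbK : ∀ a : Fin m ⊕ Fin m, (b' a : H) ∈ K := fun a => (b' a).2
  have hb'ite : ∀ a c : Fin m ⊕ Fin m,
      ⟪(b' a : H), (b' c : H)⟫ = if a = c then 1 else 0 := by
    intro a c
    have := orthonormal_iff_ite.mp b'.orthonormal a c
    rwa [Submodule.coe_inner] at this
  have hTvb : ∀ a, ⟪T v, (b' a : H)⟫ = 0 := fun a => hKTv _ (hbK a)
  have hvb : ∀ a, ⟪v, (b' a : H)⟫ = 0 := fun a => hKv _ (hbK a)
  have hbTv : ∀ a, ⟪(b' a : H), T v⟫ = 0 := fun a => by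
    rw [← inner_conj_symm, hTvb]; simp
  have hbv : ∀ a, ⟪(b' a : H), v⟫ = 0 := fun a => by
    rw [← inner_conj_symm, hvb]; simp
  have hon : Orthonormal ℂ f := by
    rw [orthonormal_iff_ite]
    rintro (i | i) (j | j) <;>
      induction i using Fin.cases <;>
      induction j using Fin.cases <;>
      simp [hfdef, hTvTv, hvv, hTvv, hvTv, hTvb, hvb, hbTv, hbv, hb'ite,
        Fin.succ_ne_zero, (Fin.succ_ne_zero _).symm, Fin.succ_inj, hv, hTnorm]
  have hcard : Fintype.card (Fin (m + 1) ⊕ Fin (m + 1)) = Module.finrank ℂ H := by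
    simp only [Fintype.card_sum, Fintype.card_fin]
    omega
  have hspan : ⊤ ≤ Submodule.span ℂ (Set.range f) :=
    (hon.linearIndependent.span_eq_top_of_card_eq_finrank hcard).ge
  refine ⟨OrthonormalBasis.mk hon hspan, ?_⟩
  intro j
  rw [OrthonormalBasis.coe_mk]
  induction j using Fin.cases with
  | zero =>
    constructor <;> simp [hfdef, hsq]
  | succ j =>
    obtain ⟨h1, h2⟩ := hb' j
    have h1' : T ((b' (Sum.inl j) : H)) = -((b' (Sum.inr j) : H)) := by
      have := congrArg Subtype.val h1
      simpa using this
    have h2' : T ((b' (Sum.inr j) : H)) = ((b' (Sum.inl j) : H)) := by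
      have := congrArg Subtype.val h2
      exact this
    constructor <;> simp [hfdef, Fin.cons_succ, h1', h2']

theorem stmt_2 {H : Type*} [NormedAddCommGroup H] [InnerProductSpace ℂ H]
    [FiniteDimensional ℂ H] (T : H → H)
    (hadd : ∀ v w, T (v + w) = T v + T w)
    (hsmul : ∀ (c : ℂ) v, T (c • v) = (starRingEnd ℂ c) • T v)
    (hsurj : Function.Surjective T)
    (hinner : ∀ v w, ⟪T v, T w⟫ = starRingEnd ℂ ⟪v, w⟫)
    (hsq : ∀ v, T (T v) = -v) :
    ∃ m : ℕ, Module.finrank ℂ H = 2 * m ∧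
      ∃ b : OrthonormalBasis (Fin m ⊕ Fin m) ℂ H,
        ∀ j : Fin m, T (b (Sum.inl j)) = -(b (Sum.inr j)) ∧
          T (b (Sum.inr j)) = b (Sum.inl j) := by
  exact aux_main (Module.finrank ℂ H) H inferInstance inferInstance inferInstance
    rfl T hadd hsmul hinner hsq
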